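/- arXiv:0909.3568 — 5 statements merged into one kernel-verified Lean document; each statement's English description precedes it below -/
import Mathlib

section
/- Let z₀, z be points of the open unit ball Bⁿ of ℂⁿ and let r ∈ (0,1). If z belongs to the pseudohyperbolic ball B(z₀,r), i.e. (1-‖z₀‖²)(1-‖z‖²) > (1-r²)|1-⟨z,z₀⟩|², then 1-‖z₀‖² > ((1-r²)/4)·(‖z-z₀‖² + |⟨z-z₀,z₀⟩|). -/
open scoped ComplexInnerProductSpace

/-- **Lemma 1.3 (Abate–Saracco).** If `z` lies in the pseudohyperbolic ball of center `z₀`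
and radius `r` in the unit ball of `ℂⁿ`, then
`1 - ‖z₀‖² > ((1-r²)/4)·(‖z-z₀‖² + |⟨z-z₀,z₀⟩|)`.
Here the Hermitian product `⟨z,w⟩` (linear in the first slot) is `⟪w, z⟫` in Mathlib. -/
theorem stmt_0 (n : ℕ) (hn : 1 ≤ n) (z₀ z : EuclideanSpace ℂ (Fin n))
    (hz₀ : ‖z₀‖ < 1) (hz : ‖z‖ < 1) (r : ℝ) (hr0 : 0 < r) (hr1 : r < 1)
    (hmem : (1 - ‖z₀‖ ^ 2) * (1 - ‖z‖ ^ 2) > (1 - r ^ 2) * ‖1 - ⟪z₀, z⟫‖ ^ 2) :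
    1 - ‖z₀‖ ^ 2 > (1 - r ^ 2) / 4 * (‖z - z₀‖ ^ 2 + ‖⟪z₀, z - z₀⟫‖) := by
  set a : ℂ := ⟪z₀, z⟫ with ha
  set t : ℝ := ‖1 - a‖ with htdef
  have hD : 0 < 1 - ‖z₀‖ ^ 2 := by nlinarith [norm_nonneg z₀]
  have hE : 0 < 1 - ‖z‖ ^ 2 := by nlinarith [norm_nonneg z]
  have hs : 0 < 1 - r ^ 2 := by nlinarith
  have ht : 0 ≤ t := norm_nonneg _
  -- norm identity
  have hnorm : ‖z - z₀‖ ^ 2 = ‖z‖ ^ 2 - 2 * a.re + ‖z₀‖ ^ 2 := by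
    have := @norm_sub_sq ℂ _ _ _ _ z z₀
    rw [← inner_conj_symm z z₀] at this
    have h3 : (⟪z, z₀⟫ : ℂ).re = a.re := by rw [ha, ← inner_conj_symm z z₀, Complex.conj_re]
    simp [ha, Complex.add_re, Complex.conj_re] at this
    linarith
  have h1 : 1 - a.re ≤ t := by
    have := Complex.re_le_norm (1 - a)
    simpa using this
  have h2 : ‖(⟪z₀, z - z₀⟫ : ℂ)‖ ≤ t + (1 - ‖z₀‖ ^ 2) := by
    have hinner : (⟪z₀, z - z₀⟫ : ℂ) = -(1 - a) + ((1 - ‖z₀‖ ^ 2 : ℝ) : ℂ) := by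
      rw [inner_sub_right, ← ha, inner_self_eq_norm_sq_to_K]
      push_cast
      norm_num
    rw [hinner]
    calc ‖(-(1 - a) + ((1 - ‖z₀‖ ^ 2 : ℝ) : ℂ))‖
        ≤ ‖(-(1 - a))‖ + ‖(((1 - ‖z₀‖ ^ 2 : ℝ) : ℂ))‖ :=
          norm_add_le _ _
      _ = t + (1 - ‖z₀‖ ^ 2) := by
          rw [norm_neg, Complex.norm_real, Real.norm_eq_abs, abs_of_pos hD]
  -- key: (1-r²)/4 * (3t - E) ≤ (1-r²) t² / E < D
  nlinarith [sq_nonneg (2 * t - 3 / 4 * (1 - ‖z‖ ^ 2)), sq_nonneg (1 - ‖z‖ ^ 2),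
    mul_pos hs hE, mul_nonneg hs.le ht, mul_pos hD hE,
    mul_le_mul_of_nonneg_left h2 hs.le, mul_le_mul_of_nonneg_left h1 hs.le,
    norm_nonneg (⟪z₀, z - z₀⟫ : ℂ)]
end

section
/- For all z₀, z in the open unit ball Bⁿ of ℂⁿ one has the strict inequality |1-⟨z,z₀⟩|²/(1-‖z‖²) > (1/2)·|⟨z-z₀,z₀⟩|. -/
open scoped ComplexInnerProductSpace

set_option maxHeartbeats 800000

/-- For all `z₀, z` in the open unit ball of `ℂⁿ` one has
`|1-⟨z,z₀⟩|²/(1-‖z‖²) > (1/2)·|⟨z-z₀,z₀⟩|`.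
Here the Hermitian product `⟨z,w⟩` (linear in the first slot) is `⟪w, z⟫` in Mathlib. -/
theorem stmt_2 (n : ℕ) (hn : 1 ≤ n) (z₀ z : EuclideanSpace ℂ (Fin n))
    (hz₀ : ‖z₀‖ < 1) (hz : ‖z‖ < 1) :
    ‖1 - ⟪z₀, z⟫‖ ^ 2 / (1 - ‖z‖ ^ 2) > 1 / 2 * ‖⟪z₀, z - z₀⟫‖ := by
  set t : ℝ := ‖z₀‖ with htdef
  set s : ℝ := ‖z‖ with hsdef
  have ht0 : (0:ℝ) ≤ t := norm_nonneg _
  have hs0 : (0:ℝ) ≤ s := norm_nonneg _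
  set a : ℂ := ⟪z₀, z⟫ with ha
  have habs : ‖a‖ ≤ t * s := by
    exact norm_inner_le_norm z₀ z
  have hcast : ((t:ℂ)^2) = ((t^2 : ℝ) : ℂ) := by push_cast; ring
  have hsub : ⟪z₀, z - z₀⟫ = a - (t:ℂ)^2 := by
    rw [inner_sub_right, ha, htdef]
    norm_num [inner_self_eq_norm_sq_to_K]
  have hden : (0:ℝ) < 1 - s^2 := by nlinarith
  set u := ‖1 - a‖ with hu
  set m := ‖a - (t:ℂ)^2‖ with hm
  have h1 : m^2 = (a.re - t^2)^2 + a.im^2 := by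
    rw [hm, hcast, Complex.sq_norm, Complex.normSq_apply]
    simp only [Complex.sub_re, Complex.sub_im, Complex.ofReal_re, Complex.ofReal_im]
    ring
  have h2 : u^2 = (1 - a.re)^2 + a.im^2 := by
    rw [hu, Complex.sq_norm, Complex.normSq_apply]
    simp only [Complex.sub_re, Complex.sub_im, Complex.one_re, Complex.one_im]
    ring
  have h3 : a.re^2 + a.im^2 ≤ (t*s)^2 := by
    have h := pow_le_pow_left₀ (norm_nonneg a) habs 2
    rw [Complex.sq_norm, Complex.normSq_apply] at h
    nlinarith [h]
  have h4 : a.re^2 + a.im^2 ≤ t^2 := by nlinarith [mul_nonneg ht0 hs0]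
  have hmu : m^2 ≤ t^2 * u^2 := by
    nlinarith [mul_nonneg (by nlinarith : (0:ℝ) ≤ 1 - t^2)
      (by linarith : (0:ℝ) ≤ t^2 - (a.re^2 + a.im^2))]
  have htri : (1:ℝ) ≤ u + ‖a‖ := by
    calc (1:ℝ) = ‖(1 - a) + a‖ := by norm_num
    _ ≤ ‖1 - a‖ + ‖a‖ := norm_add_le _ _
  have hulb : 1 - t*s ≤ u := by linarith
  have hts1 : t * s < 1 := by nlinarith
  have hu0 : 0 < u := by linarith
  have hmtu : m ≤ t * u := by
    nlinarith [norm_nonneg (a - (t:ℂ)^2), mul_nonneg ht0 (le_of_lt hu0)]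
  have h2u : t * (1 - s^2) < 2 * u := by
    nlinarith [mul_nonneg ht0 (sq_nonneg (1-s))]
  have key : 1/2 * m * (1 - s^2) < u^2 := by
    nlinarith [mul_lt_mul_of_pos_left h2u hu0,
      mul_le_mul_of_nonneg_right hmtu (le_of_lt hden)]
  rw [gt_iff_lt, lt_div_iff₀ hden, hsub]
  exact key
end

section
/- Let (X,d) be a metric space and let {x_j}_{j∈ℕ} be a sequence in X. Suppose there exist N ≥ 1 and r > 0 such that for every x ∈ X the number of indices j with d(x,x_j) < r is at most N. Then the index set ℕ can be partitioned into at most N sets S₀,…,S_{N-1} such that for each i and all distinct j, k ∈ S_i one has d(x_j,x_k) ≥ r; in other words, the sequence is the union of at most N uniformly discrete subsequences with separation constant at least r. -/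
noncomputable def greedyColor {X : Type*} [MetricSpace X] (x : ℕ → X) (N : ℕ) (hN : 0 < N)
    (r : ℝ) : ℕ → Fin N
  | j =>
    let used : Finset (Fin N) :=
      (((Finset.range j).filter (fun k => dist (x j) (x k) < r)).attach).image
        (fun k => greedyColor x N hN r k.1)
    if h : (Finset.univ \ used).Nonempty then h.choose else ⟨0, hN⟩
decreasing_by
  exact Finset.mem_range.mp (Finset.mem_filter.mp k.2).1

/-- **Lemma 3.1 (Abate–Saracco).** If every open metric ball of radius `r` contains at most `N`
points of the sequence `x`, then the index set `ℕ` can be partitioned into at most `N` classes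
(given by a coloring `m : ℕ → Fin N`) such that any two distinct points in the same class are
at distance at least `r`; i.e. the sequence is a union of at most `N` uniformly discrete
subsequences with separation constant at least `r`. -/
theorem stmt_3 {X : Type*} [MetricSpace X] (x : ℕ → X) (N : ℕ) (hN : 1 ≤ N)
    (r : ℝ) (hr : 0 < r)
    (hcount : ∀ y : X, {j : ℕ | dist y (x j) < r}.Finite ∧
      {j : ℕ | dist y (x j) < r}.ncard ≤ N) :
    ∃ m : ℕ → Fin N, ∀ j k : ℕ, j ≠ k → m j = m k → r ≤ dist (x j) (x k) := by
  set m := greedyColor x N hN r with hm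
  -- key: for each j, the used set has card < N, and greedy j avoids it
  have key : ∀ j k : ℕ, k < j → dist (x j) (x k) < r → m j ≠ m k := by
    intro j k hkj hdist
    have husedcard : ∀ (used : Finset (Fin N)),
        used = (((Finset.range j).filter (fun k => dist (x j) (x k) < r)).attach).image
          (fun k => greedyColor x N hN r k.1) → (Finset.univ \ used).Nonempty := by
      intro used hused
      set F := (Finset.range j).filter (fun k => dist (x j) (x k) < r) with hF
      have hj : j ∉ F := by simp [hF]
      have hsub : ((insert j F : Finset ℕ) : Set ℕ) ⊆ {k | dist (x j) (x k) < r} := by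
        intro a ha
        simp only [Finset.coe_insert, Set.mem_insert_iff] at ha
        rcases ha with rfl | ha
        · simpa using hr
        · exact (Finset.mem_filter.mp ha).2
      have hcard : (insert j F).card ≤ N := by
        have h1 := (Set.ncard_le_ncard hsub (hcount (x j)).1).trans (hcount (x j)).2
        rwa [Set.ncard_coe_finset] at h1
      have hFcard : F.card < N := by
        have := Finset.card_insert_of_notMem hj
        omega
      have : used.card < N := by
        calc used.card ≤ F.attach.card := hused ▸ Finset.card_image_le
          _ = F.card := Finset.card_attach
          _ < N := hFcard
      have : used ≠ Finset.univ := by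
        intro h; rw [h] at this; simp at this
      rw [Finset.sdiff_nonempty]
      intro hsub2
      exact this (Finset.eq_univ_of_card _ (le_antisymm (Finset.card_le_univ _)
        (by simpa using Finset.card_le_card hsub2)))
    intro heq
    set used : Finset (Fin N) :=
      (((Finset.range j).filter (fun k => dist (x j) (x k) < r)).attach).image
        (fun k => greedyColor x N hN r k.1) with hused
    have hne := husedcard used hused
    have hmemk : m k ∈ used := by
      rw [hused]
      exact Finset.mem_image.mpr ⟨⟨k, by simp [Finset.mem_filter, hkj, hdist]⟩,
        Finset.mem_attach _ _, rfl⟩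
    have hmj : m j = hne.choose := by
      rw [hm]
      conv_lhs => rw [greedyColor]
      simp only [← hused, dif_pos hne]
    have hspec := hne.choose_spec
    rw [← hmj, heq] at hspec
    exact (Finset.mem_sdiff.mp hspec).2 hmemk
  refine ⟨m, fun j k hjk hmjk => ?_⟩
  by_contra hlt
  push_neg at hlt
  rcases Nat.lt_or_ge k j with h | h
  · exact key j k h hlt hmjk
  · have : k > j := by omega
    exact key k j this (by rwa [dist_comm]) hmjk.symm
end

section
/- Let Γ = {z_j} be a sequence in Bⁿ that is uniformly discrete with respect to the pseudohyperbolic distance. Then Σ_j (1-‖z_j‖)^{n+1} < ∞. -/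
open scoped ComplexInnerProductSpace

noncomputable section

/-- The pseudohyperbolic distance on the unit ball of `ℂⁿ`:
`ρ(z,w) = (1 - (1-‖z‖²)(1-‖w‖²)/|1-⟨z,w⟩|²)^{1/2}`. -/
def pdist {n : ℕ} (z w : EuclideanSpace ℂ (Fin n)) : ℝ :=
  Real.sqrt (1 - (1 - ‖z‖ ^ 2) * (1 - ‖w‖ ^ 2) / ‖1 - ⟪z, w⟫‖ ^ 2)


lemma real_inner_eq_complex_re {n : ℕ} (x y : EuclideanSpace ℂ (Fin n)) :
    (inner ℝ x y : ℝ) = (⟪x, y⟫).re := by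
  simp [PiLp.inner_apply, RCLike.inner_apply, map_sum]

lemma orthonormal_pair {n : ℕ} (u : EuclideanSpace ℂ (Fin n)) (hu : ‖u‖ = 1) :
    Orthonormal ℝ ![u, Complex.I • u] := by
  rw [orthonormal_iff_ite]
  intro i j
  have h1 : (⟪u, u⟫ : ℂ) = 1 := by
    rw [inner_self_eq_norm_sq_to_K, hu]; norm_num
  have h2 : ‖Complex.I • u‖ = 1 := by
    rw [norm_smul, Complex.norm_I, hu, one_mul]
  fin_cases i <;> fin_cases j <;>
    simp [real_inner_eq_complex_re, inner_smul_left, inner_smul_right, h1, h2,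
      inner_self_eq_norm_sq_to_K, hu] <;>
    simp [mul_comm]

lemma exists_adapted_onb {n m : ℕ} (hnm : n = m + 1) (u : EuclideanSpace ℂ (Fin n))
    (hu : ‖u‖ = 1) :
    ∃ b : OrthonormalBasis (Fin 2 ⊕ Fin (2 * m)) ℝ (EuclideanSpace ℂ (Fin n)),
      b (Sum.inl 0) = u ∧ b (Sum.inl 1) = Complex.I • u := by
  set w : Fin 2 → EuclideanSpace ℂ (Fin n) := ![u, Complex.I • u] with hw
  set v : Fin 2 ⊕ Fin (2 * m) → EuclideanSpace ℂ (Fin n) := Sum.elim w 0 with hv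
  have hcard : Module.finrank ℝ (EuclideanSpace ℂ (Fin n)) = Fintype.card (Fin 2 ⊕ Fin (2 * m)) := by
    rw [← Module.finrank_mul_finrank ℝ ℂ (EuclideanSpace ℂ (Fin n)),
      Complex.finrank_real_complex, finrank_euclideanSpace_fin]
    simp [hnm]; omega
  have hON : Orthonormal ℝ ((Set.range (Sum.inl : Fin 2 → Fin 2 ⊕ Fin (2*m))).restrict v) := by
    let e : Fin 2 ≃ Set.range (Sum.inl : Fin 2 → Fin 2 ⊕ Fin (2*m)) :=
      Equiv.ofInjective _ Sum.inl_injective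
    have key : (Set.range (Sum.inl : Fin 2 → Fin 2 ⊕ Fin (2*m))).restrict v = w ∘ e.symm := by
      funext s
      obtain ⟨j, hj⟩ := s.2
      have he : ((e j : Set.range (Sum.inl : Fin 2 → Fin 2 ⊕ Fin (2*m))) : Fin 2 ⊕ Fin (2*m)) = Sum.inl j := by simp [e, Equiv.ofInjective_apply]
      have h1 : e j = s := Subtype.ext (he.trans hj)
      have h2 : e.symm s = j := by rw [← h1, Equiv.symm_apply_apply]
      simp only [Set.restrict_apply, Function.comp_apply, h2, ← hj, hv, Sum.elim_inl]
      show Sum.elim w 0 (s : Fin 2 ⊕ Fin (2*m)) = w j; rw [← hj]; rfl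
    rw [key]
    exact (orthonormal_pair u hu).comp _ e.symm.injective
  obtain ⟨b, hb⟩ := hON.exists_orthonormalBasis_extension_of_card_eq hcard
  refine ⟨b, ?_, ?_⟩
  · rw [hb (Sum.inl 0) ⟨0, rfl⟩]; rfl
  · rw [hb (Sum.inl 1) ⟨1, rfl⟩]; rfl

open MeasureTheory

set_option maxHeartbeats 1000000 in
lemma tube_volume {n : ℕ} (hn : 1 ≤ n)
    [MeasurableSpace (EuclideanSpace ℂ (Fin n))] [BorelSpace (EuclideanSpace ℂ (Fin n))]
    {c : ℝ} (hc0 : 0 < c) (hc1 : c ≤ 1) (z : EuclideanSpace ℂ (Fin n)) (hz : ‖z‖ < 1) :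
    ENNReal.ofReal ((c / Real.sqrt n) ^ (2 * n) * (1 - ‖z‖ ^ 2) ^ (n + 1)) ≤
      volume {w : EuclideanSpace ℂ (Fin n) |
        ‖w - z‖ ^ 2 ≤ 4 * c ^ 2 * (1 - ‖z‖ ^ 2) ∧
          ‖⟪z, w - z⟫‖ ≤ c * (1 - ‖z‖ ^ 2)} := by
  obtain ⟨m, rfl⟩ : ∃ m, n = m + 1 := ⟨n - 1, by omega⟩
  set s : ℝ := 1 - ‖z‖ ^ 2 with hs_def
  have hz0 : 0 ≤ ‖z‖ := norm_nonneg z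
  have hs0 : 0 < s := by simp only [hs_def]; nlinarith
  have hs1 : s ≤ 1 := by simp only [hs_def]; nlinarith
  have hN1 : (1:ℝ) ≤ ((m:ℝ) + 1) := by have : (0:ℝ) ≤ (m:ℝ) := Nat.cast_nonneg m; linarith
  have hcast : ((m + 1 : ℕ) : ℝ) = (m : ℝ) + 1 := by push_cast; ring
  obtain ⟨u, hu, hzu⟩ : ∃ u : EuclideanSpace ℂ (Fin (m+1)), ‖u‖ = 1 ∧ z = ‖z‖ • u := by
    by_cases h0 : z = 0
    · refine ⟨EuclideanSpace.single (⟨0, by omega⟩ : Fin (m+1)) (1 : ℂ), ?_, ?_⟩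
      · simp [EuclideanSpace.norm_single]
      · simp [h0]
    · refine ⟨‖z‖⁻¹ • z, ?_, ?_⟩
      · rw [norm_smul, norm_inv, norm_norm, inv_mul_cancel₀ (norm_ne_zero_iff.mpr h0)]
      · rw [smul_smul, mul_inv_cancel₀ (norm_ne_zero_iff.mpr h0), one_smul]
  obtain ⟨b, hb0, hb1⟩ := exists_adapted_onb rfl u hu
  have hsqn : (0:ℝ) < Real.sqrt (m+1) := Real.sqrt_pos.mpr (by positivity)
  have hsqn2 : (Real.sqrt (m+1)) ^ 2 = ((m:ℝ) + 1) := Real.sq_sqrt (by positivity)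
  set r : (Fin 2 ⊕ Fin (2 * m)) → ℝ := Sum.elim (fun _ => c / (2 * Real.sqrt (m+1)) * s)
    (fun _ => c / (2 * Real.sqrt (m+1)) * Real.sqrt s) with hr_def
  have hr_nonneg : ∀ i, 0 ≤ r i := by
    rintro (i | i) <;> simp only [hr_def, Sum.elim_inl, Sum.elim_inr]
    · exact mul_nonneg (div_nonneg hc0.le (by positivity)) hs0.le
    · exact mul_nonneg (div_nonneg hc0.le (by positivity)) (Real.sqrt_nonneg _)
  set Q : Set (EuclideanSpace ℝ (Fin 2 ⊕ Fin (2 * m))) :=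
    WithLp.ofLp ⁻¹' Set.univ.pi (fun i => Set.Icc (-(r i)) (r i)) with hQ_def
  have hQmeas : MeasurableSet Q :=
    (PiLp.volume_preserving_ofLp _).measurable
      (MeasurableSet.univ_pi fun i => measurableSet_Icc)
  have h5 : Real.sqrt s ^ (2 * m) = s ^ m := by rw [pow_mul, Real.sq_sqrt hs0.le]
  have hQvol : volume Q =
      ENNReal.ofReal ((c / Real.sqrt (m+1)) ^ (2 * (m+1)) * s ^ ((m+1) + 1)) := by
    have h1 : volume Q = volume (Set.univ.pi fun i => Set.Icc (-(r i)) (r i) :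
        Set ((Fin 2 ⊕ Fin (2 * m)) → ℝ)) :=
      (PiLp.volume_preserving_ofLp _).measure_preimage
        (MeasurableSet.univ_pi fun i => measurableSet_Icc).nullMeasurableSet
    rw [h1, volume_pi_pi]
    have h2 : ∀ i, volume (Set.Icc (-(r i)) (r i)) = ENNReal.ofReal (2 * r i) := by
      intro i; rw [Real.volume_Icc]; ring_nf
    simp_rw [h2]
    rw [← ENNReal.ofReal_prod_of_nonneg (fun i _ => by linarith [hr_nonneg i])]
    congr 1
    rw [Fintype.prod_sum_type]
    simp only [hr_def, Sum.elim_inl, Sum.elim_inr, Finset.prod_const, Finset.card_univ,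
      Fintype.card_fin]
    have h3 : (2 * (c / (2 * Real.sqrt ((m:ℝ)+1)) * s)) = c / Real.sqrt ((m:ℝ)+1) * s := by
      field_simp
    have h4 : (2 * (c / (2 * Real.sqrt ((m:ℝ)+1)) * Real.sqrt s))
        = c / Real.sqrt ((m:ℝ)+1) * Real.sqrt s := by
      field_simp
    rw [h3, h4, mul_pow, mul_pow, h5,
      show 2 * (m+1) = 2 + 2 * m from by ring, show (m+1) + 1 = 2 + m from by ring,
      pow_add, pow_add]
    ring
  set Φ : EuclideanSpace ℂ (Fin (m+1)) → EuclideanSpace ℝ (Fin 2 ⊕ Fin (2 * m)) :=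
    fun w => b.repr (w - z) with hΦ_def
  have hΦ : MeasurePreserving Φ volume volume :=
    b.measurePreserving_repr.comp (measurePreserving_sub_right volume z)
  have hpre : volume (Φ ⁻¹' Q) = volume Q := hΦ.measure_preimage hQmeas.nullMeasurableSet
  have hsub : Φ ⁻¹' Q ⊆ {w : EuclideanSpace ℂ (Fin (m+1)) |
      ‖w - z‖ ^ 2 ≤ 4 * c ^ 2 * s ∧ ‖⟪z, w - z⟫‖ ≤ c * s} := by
    intro w hw
    simp only [Set.mem_preimage, hQ_def, Set.mem_pi, Set.mem_univ, forall_true_left,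
      Set.mem_Icc] at hw
    set ζ := w - z with hζ_def
    set x : EuclideanSpace ℝ (Fin 2 ⊕ Fin (2 * m)) := b.repr ζ with hx_def
    have hxr : ∀ i, |x i| ≤ r i := fun i => abs_le.mpr (hw i)
    have hxsq : ∀ i, (x i) ^ 2 ≤ (r i) ^ 2 := fun i => by
      have h := hxr i
      calc (x i) ^ 2 = |x i| ^ 2 := (sq_abs _).symm
        _ ≤ (r i) ^ 2 := pow_le_pow_left₀ (abs_nonneg _) h 2
    have hrsq : ∀ i, (r i) ^ 2 ≤ c ^ 2 * s / (4 * ((m:ℝ)+1)) := by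
      rintro (i | i) <;> simp only [hr_def, Sum.elim_inl, Sum.elim_inr] <;>
        rw [mul_pow, div_pow, mul_pow, hsqn2]
      · have hss : s ^ 2 ≤ s := by nlinarith
        have h6 : c ^ 2 / (2 ^ 2 * ((m:ℝ)+1)) * s ^ 2 ≤ c ^ 2 / (2 ^ 2 * ((m:ℝ)+1)) * s :=
          mul_le_mul_of_nonneg_left hss (by positivity)
        calc c ^ 2 / (2 ^ 2 * ((m:ℝ)+1)) * s ^ 2 ≤ c ^ 2 / (2 ^ 2 * ((m:ℝ)+1)) * s := h6
          _ = c ^ 2 * s / (4 * ((m:ℝ)+1)) := by ring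
      · rw [Real.sq_sqrt hs0.le]
        exact le_of_eq (by ring)
    constructor
    · have hnorm : ‖ζ‖ ^ 2 = ∑ i, (x i) ^ 2 := by
        rw [← b.repr.norm_map ζ, EuclideanSpace.norm_eq,
          Real.sq_sqrt (Finset.sum_nonneg fun i _ => by positivity)]
        exact Finset.sum_congr rfl fun i _ => by rw [Real.norm_eq_abs, sq_abs]
      have hcard : (Fintype.card (Fin 2 ⊕ Fin (2 * m)) : ℝ) = 2 * ((m:ℝ)+1) := by
        rw [Fintype.card_sum, Fintype.card_fin, Fintype.card_fin]
        push_cast; ring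
      have hsum : ∑ i, (x i) ^ 2 ≤
          (Fintype.card (Fin 2 ⊕ Fin (2 * m)) : ℝ) * (c ^ 2 * s / (4 * ((m:ℝ)+1))) := by
        calc ∑ i, (x i) ^ 2 ≤ ∑ _i : Fin 2 ⊕ Fin (2 * m), (c ^ 2 * s / (4 * ((m:ℝ)+1))) :=
              Finset.sum_le_sum fun i _ => (hxsq i).trans (hrsq i)
          _ = _ := by rw [Finset.sum_const, Finset.card_univ, nsmul_eq_mul]
      rw [hnorm]
      calc ∑ i, (x i) ^ 2 ≤ _ := hsum
        _ = 2 * ((m:ℝ)+1) * (c ^ 2 * s / (4 * ((m:ℝ)+1))) := by rw [hcard]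
        _ = c ^ 2 * s / 2 := by field_simp; ring
        _ ≤ 4 * c ^ 2 * s := by nlinarith [sq_nonneg c]
    · have hinner : (⟪z, ζ⟫ : ℂ) = (‖z‖ : ℂ) * ⟪u, ζ⟫ := by
        conv_lhs => rw [hzu]
        rw [show (‖z‖ : ℝ) • u = ((‖z‖ : ℝ) : ℂ) • u from by rw [Complex.coe_smul]]
        rw [inner_smul_left, Complex.conj_ofReal]
      have hre : (⟪u, ζ⟫ : ℂ).re = x (Sum.inl 0) := by
        rw [hx_def, b.repr_apply_apply, hb0, real_inner_eq_complex_re]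
      have him : (⟪u, ζ⟫ : ℂ).im = x (Sum.inl 1) := by
        rw [hx_def, b.repr_apply_apply, hb1, real_inner_eq_complex_re, inner_smul_left]
        simp [Complex.mul_re]
      have habs2 : ‖(⟪u, ζ⟫ : ℂ)‖ ^ 2 = x (Sum.inl 0) ^ 2 + x (Sum.inl 1) ^ 2 := by
        rw [Complex.sq_norm, Complex.normSq_apply, hre, him]; ring
      have hx01 : x (Sum.inl 0) ^ 2 + x (Sum.inl 1) ^ 2 ≤ (c * s) ^ 2 := by
        have hrr : (c / (2 * Real.sqrt ((m:ℝ)+1)) * s) ^ 2 ≤ (c * s) ^ 2 / 2 := by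
          rw [mul_pow, div_pow, mul_pow, hsqn2]
          rw [div_mul_eq_mul_div, div_le_div_iff₀ (by positivity) (by norm_num)]
          nlinarith [sq_nonneg (c * s), mul_nonneg (sq_nonneg c) (sq_nonneg s)]
        have key : ∀ i : Fin 2, (x (Sum.inl i)) ^ 2 ≤ (c * s) ^ 2 / 2 := fun i =>
          le_trans (hxsq _) (by simp only [hr_def, Sum.elim_inl]; exact hrr)
        have k0 := key 0
        have k1 := key 1
        set X0 := x (Sum.inl 0) ^ 2 with hX0
        set X1 := x (Sum.inl 1) ^ 2 with hX1
        calc X0 + X1 ≤ (c * s) ^ 2 / 2 + (c * s) ^ 2 / 2 := add_le_add k0 k1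
          _ = (c * s) ^ 2 := by ring
      have habs : ‖(⟪u, ζ⟫ : ℂ)‖ ≤ c * s := by
        nlinarith [norm_nonneg (⟪u, ζ⟫ : ℂ),
          mul_nonneg hc0.le hs0.le]
      rw [hinner, norm_mul, Complex.norm_real, norm_norm]
      calc ‖z‖ * ‖(⟪u, ζ⟫ : ℂ)‖ ≤ 1 * (c * s) :=
            mul_le_mul hz.le habs (norm_nonneg _) zero_le_one
        _ = c * s := one_mul _
  have final := measure_mono (μ := volume) hsub
  rw [hpre, hQvol] at final
  have : ENNReal.ofReal ((c / Real.sqrt ((m+1:ℕ))) ^ (2 * (m + 1)) * s ^ (m + 1 + 1))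
      = ENNReal.ofReal ((c / Real.sqrt ((m:ℝ)+1)) ^ (2 * (m + 1)) * s ^ (m + 1 + 1)) := by
    rw [hcast]
  rw [this]
  exact final

set_option maxHeartbeats 2000000 in
lemma pdist_lt {n : ℕ} {z₁ z₂ w : EuclideanSpace ℂ (Fin n)} (h₁ : ‖z₁‖ < 1) (h₂ : ‖z₂‖ < 1)
    {c d : ℝ} (hd0 : 0 < d) (hd1 : d ≤ 1/2) (hc : c = d ^ 2 / 56)
    (m1a : ‖w - z₁‖ ^ 2 ≤ 4 * c ^ 2 * (1 - ‖z₁‖ ^ 2))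
    (m1b : ‖⟪z₁, w - z₁⟫‖ ≤ c * (1 - ‖z₁‖ ^ 2))
    (m2a : ‖w - z₂‖ ^ 2 ≤ 4 * c ^ 2 * (1 - ‖z₂‖ ^ 2))
    (m2b : ‖⟪z₂, w - z₂⟫‖ ≤ c * (1 - ‖z₂‖ ^ 2)) :
    pdist z₁ z₂ < d := by
  have hz10 : 0 ≤ ‖z₁‖ := norm_nonneg _
  have hz20 : 0 ≤ ‖z₂‖ := norm_nonneg _
  set s : ℝ := 1 - ‖z₁‖ ^ 2 with hs_def
  set t : ℝ := 1 - ‖z₂‖ ^ 2 with ht_def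
  have hs0 : 0 < s := by simp only [hs_def]; nlinarith
  have ht0 : 0 < t := by simp only [ht_def]; nlinarith
  have hc0 : 0 < c := by rw [hc]; positivity
  have hc1 : c ≤ 1/224 := by rw [hc]; nlinarith
  set p : ℝ := ‖w - z₁‖ with hp_def
  set p' : ℝ := ‖w - z₂‖ with hp'_def
  have hp0 : 0 ≤ p := norm_nonneg _
  have hp'0 : 0 ≤ p' := norm_nonneg _
  set q : ℝ := 1 - ‖w‖ ^ 2 with hq_def
  -- expansion of ‖w‖² around each zᵢ
  have expand : ∀ z' : EuclideanSpace ℂ (Fin n),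
      ‖w‖ ^ 2 = ‖z'‖ ^ 2 + 2 * (inner ℝ z' (w - z') : ℝ) + ‖w - z'‖ ^ 2 := by
    intro z'
    have h := norm_add_sq_real z' (w - z')
    rwa [add_sub_cancel] at h
  have hre1 : |(inner ℝ z₁ (w - z₁) : ℝ)| ≤ c * s := by
    rw [real_inner_eq_complex_re]
    exact (Complex.abs_re_le_norm _).trans m1b
  have hre2 : |(inner ℝ z₂ (w - z₂) : ℝ)| ≤ c * t := by
    rw [real_inner_eq_complex_re]
    exact (Complex.abs_re_le_norm _).trans m2b
  have hq1l : s - 2*c*s - 4*c^2*s ≤ q := by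
    have h := expand z₁
    have h2 := abs_le.mp hre1
    nlinarith [m1a, h, h2.1, h2.2, hq_def, hs_def, hp_def]
  have hq1u : q ≤ s + 2*c*s := by
    have h := expand z₁
    have h2 := abs_le.mp hre1
    nlinarith [sq_nonneg p, h, h2.1, h2.2, hq_def, hs_def]
  have hq2l : t - 2*c*t - 4*c^2*t ≤ q := by
    have h := expand z₂
    have h2 := abs_le.mp hre2
    nlinarith [m2a, h, h2.1, h2.2, hq_def, ht_def, hp'_def]
  have hq2u : q ≤ t + 2*c*t := by
    have h := expand z₂
    have h2 := abs_le.mp hre2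
    nlinarith [sq_nonneg p', h, h2.1, h2.2, hq_def, ht_def]
  -- comparability
  have hcomp : ∀ a b : ℝ, 0 < a → 0 < b → a - 2*c*a - 4*c^2*a ≤ b + 2*c*b → a ≤ b * (1 + 6*c) := by
    intro a b ha hb hab
    have hK : 0 < 1 - 2*c - 4*c^2 := by nlinarith
    have h8 : 0 ≤ 2*c - 16*c^2 - 24*c^3 := by nlinarith [mul_pos hc0 hc0, mul_pos (mul_pos hc0 hc0) hc0]
    have h9 : b*(1+2*c) ≤ (b*(1+6*c))*(1-2*c-4*c^2) := by nlinarith [mul_nonneg hb.le h8]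
    have h10 : a*(1-2*c-4*c^2) ≤ (b*(1+6*c))*(1-2*c-4*c^2) := by nlinarith
    exact le_of_mul_le_mul_right h10 hK
  have hst : s ≤ t * (1 + 6*c) := hcomp s t hs0 ht0 (by linarith)
  have hts : t ≤ s * (1 + 6*c) := hcomp t s ht0 hs0 (by linarith)
  -- upper bound for A
  set A : ℝ := ‖1 - ⟪z₁, z₂⟫‖ with hA_def
  have hA0 : 0 < A := by
    have hcs : ‖⟪z₁, z₂⟫‖ ≤ ‖z₁‖ * ‖z₂‖ := by
      exact norm_inner_le_norm z₁ z₂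
    have htri : 1 - ‖⟪z₁, z₂⟫‖ ≤ A := by
      have := norm_sub_norm_le (1 : ℂ) (⟪z₁, z₂⟫ : ℂ)
      simpa using this
    nlinarith
  have tri : ∀ x y : ℂ, ‖x - y‖ ≤ ‖x‖ + ‖y‖ := fun x y => by
    simpa [sub_eq_add_neg] using norm_add_le x (-y)
  have hid : (1 : ℂ) - ⟪z₁, z₂⟫ =
      ((s : ℝ) - ⟪z₁, w - z₁⟫ : ℂ) + (⟪z₂, w - z₂⟫ + ⟪z₁ - z₂, w - z₂⟫) := by
    have h1 : (⟪z₁, z₁⟫ : ℂ) = ((‖z₁‖ : ℂ)) ^ 2 := inner_self_eq_norm_sq_to_K z₁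
    simp only [inner_sub_left, inner_sub_right, hs_def]
    push_cast
    rw [h1]
    ring
  have hz12 : ‖z₁ - z₂‖ ≤ p + p' := by
    have : z₁ - z₂ = (w - z₂) - (w - z₁) := by abel
    rw [this]
    exact (norm_sub_le _ _).trans (by rw [hp_def, hp'_def]; linarith)
  have hcross : ‖⟪z₁ - z₂, w - z₂⟫‖ ≤ (p + p') * p' := by
    have h := norm_inner_le_norm (𝕜 := ℂ) (z₁ - z₂) (w - z₂)
    exact h.trans (mul_le_mul_of_nonneg_right hz12 hp'0)
  have hA_ub : A ≤ s + c*s + c*t + (p + p') * p' := by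
    rw [hA_def, hid]
    calc ‖(((s : ℝ) - ⟪z₁, w - z₁⟫ : ℂ) + (⟪z₂, w - z₂⟫ + ⟪z₁ - z₂, w - z₂⟫))‖
        ≤ ‖((s : ℝ) - ⟪z₁, w - z₁⟫ : ℂ)‖
            + ‖(⟪z₂, w - z₂⟫ + ⟪z₁ - z₂, w - z₂⟫)‖ := norm_add_le _ _
      _ ≤ (‖((s : ℝ) : ℂ)‖ + ‖⟪z₁, w - z₁⟫‖)
            + (‖⟪z₂, w - z₂⟫‖ + ‖⟪z₁ - z₂, w - z₂⟫‖) :=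
          add_le_add (tri _ _) (norm_add_le _ _)
      _ ≤ (s + c*s) + (c*t + (p + p') * p') := by
          have habs_s : ‖((s : ℝ) : ℂ)‖ = s := by
            rw [Complex.norm_real, Real.norm_eq_abs, abs_of_pos hs0]
          rw [habs_s]
          exact add_le_add (add_le_add le_rfl m1b) (add_le_add m2b hcross)
      _ = s + c*s + c*t + (p + p') * p' := by ring
  -- product bound
  have hpp' : p * p' ≤ 2*c^2*(s + t) := by
    have h1 : (p * p') ^ 2 ≤ 16 * c^4 * (s * t) := by
      have := mul_le_mul m1a m2a (sq_nonneg _) (by positivity)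
      calc (p * p') ^ 2 = p^2 * p'^2 := by ring
        _ ≤ (4*c^2*s) * (4*c^2*t) := this
        _ = 16 * c^4 * (s * t) := by ring
    have hY0 : 0 ≤ 2*c^2*(s+t) := by positivity
    have hXY : (p*p')^2 ≤ (2*c^2*(s+t))^2 := by
      nlinarith [mul_nonneg (mul_nonneg (sq_nonneg c) (sq_nonneg c)) (sq_nonneg (s - t))]
    calc p*p' = Real.sqrt ((p*p')^2) := (Real.sqrt_sq (mul_nonneg hp0 hp'0)).symm
      _ ≤ Real.sqrt ((2*c^2*(s+t))^2) := Real.sqrt_le_sqrt hXY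
      _ = 2*c^2*(s+t) := Real.sqrt_sq hY0
  have hpd : pdist z₁ z₂ = Real.sqrt (1 - s*t/A^2) := by
    rw [pdist]
  rw [hpd, Real.sqrt_lt' hd0]
  clear hre1 hre2 hcross hz12 hid tri expand m1a m1b m2b hq1l hq1u hq2l hq2u
  clear_value s t q p p' A
  clear hs_def ht_def hq_def hp_def hp'_def hA_def hz10 hz20 h₁ h₂
  clear hpd
  have hA2 : A ≤ s*(1 + 2*c) + t*(2*c) := by
    have hppp : (p + p') * p' = p * p' + p'^2 := by ring
    nlinarith [m2a, hA_ub, hpp', mul_nonneg hc0.le hs0.le, mul_nonneg hc0.le ht0.le,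
      mul_nonneg (mul_nonneg hc0.le hc0.le) hs0.le,
      mul_nonneg (mul_nonneg hc0.le hc0.le) ht0.le]
  have hA3 : A ≤ s * (1 + 5*c) := by
    nlinarith [mul_nonneg (mul_nonneg hc0.le hc0.le) hs0.le,
      mul_le_mul_of_nonneg_left hts hc0.le]
  have hA4 : A ≤ t * (1 + 11*c) := by
    nlinarith [mul_nonneg (mul_nonneg hc0.le hc0.le) ht0.le,
      mul_le_mul_of_nonneg_left hst (by positivity : (0:ℝ) ≤ 1 + 2*c)]
  have hAA : A^2 ≤ s*t*(1 + 17*c) := by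
    have := mul_le_mul hA3 hA4 hA0.le (by positivity)
    nlinarith [mul_nonneg (mul_nonneg hs0.le ht0.le) (mul_nonneg hc0.le hc0.le),
      mul_nonneg (mul_nonneg hs0.le ht0.le) hc0.le]
  have hfin : A^2 * (1 - d^2) < s*t := by
    have hd2 : 0 < d^2 := by positivity
    have h17 : (1 + 17*c) * (1 - d^2) < 1 := by
      rw [hc]; nlinarith
    have hst0 : 0 < s*t := mul_pos hs0 ht0
    calc A^2 * (1 - d^2) ≤ s*t*(1 + 17*c) * (1 - d^2) := by
          apply mul_le_mul_of_nonneg_right hAA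
          nlinarith
      _ = s*t*((1 + 17*c) * (1 - d^2)) := by ring
      _ < s*t*1 := by exact mul_lt_mul_of_pos_left h17 hst0
      _ = s*t := mul_one _
  -- conclude
  have hA2pos : 0 < A^2 := by positivity
  have : 1 - d^2 < s*t/A^2 := (lt_div_iff₀ hA2pos).mpr (by nlinarith)
  linarith

/-- **Corollary 3.3 (Abate–Saracco), in the ball.** If a sequence in the unit ball of `ℂⁿ`
is uniformly discrete with respect to the pseudohyperbolic distance, then
`Σ_j (1-‖z_j‖)^{n+1} < ∞`. -/
theorem stmt_15 (n : ℕ) (hn : 1 ≤ n) (z : ℕ → EuclideanSpace ℂ (Fin n))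
    (hz : ∀ j, ‖z j‖ < 1) (δ : ℝ) (hδ : 0 < δ)
    (hsep : ∀ j k, j ≠ k → δ ≤ pdist (z j) (z k)) :
    Summable fun j => (1 - ‖z j‖) ^ (n + 1) := by
  classical
  borelize (EuclideanSpace ℂ (Fin n))
  set d : ℝ := min δ (1/2) with hd_def
  have hd0 : 0 < d := lt_min hδ (by norm_num)
  have hd1 : d ≤ 1/2 := min_le_right _ _
  set c : ℝ := d ^ 2 / 56 with hc_def
  have hc0 : 0 < c := by positivity
  have hc1 : c ≤ 1 := by
    have : d ^ 2 ≤ 1 := by nlinarith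
    rw [hc_def]; linarith
  set E : ℕ → Set (EuclideanSpace ℂ (Fin n)) := fun j =>
    {w | ‖w - z j‖ ^ 2 ≤ 4 * c ^ 2 * (1 - ‖z j‖ ^ 2) ∧
      ‖⟪z j, w - z j⟫‖ ≤ c * (1 - ‖z j‖ ^ 2)} with hE_def
  have hEmeas : ∀ j, MeasurableSet (E j) := by
    intro j
    apply IsClosed.measurableSet
    apply IsClosed.inter
    · exact isClosed_le (((continuous_id.sub continuous_const).norm).pow 2) continuous_const
    · exact isClosed_le (continuous_norm.comp
        ((Continuous.inner continuous_const (continuous_id.sub continuous_const)))) continuous_const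
  have hdsep : ∀ j k, j ≠ k → d ≤ pdist (z j) (z k) := fun j k h =>
    le_trans (min_le_left _ _) (hsep j k h)
  have hdisj : Pairwise (Function.onFun Disjoint E) := by
    intro j k hjk
    rw [Function.onFun, Set.disjoint_left]
    intro w hwj hwk
    have hlt := pdist_lt (hz j) (hz k) hd0 hd1 hc_def hwj.1 hwj.2 hwk.1 hwk.2
    exact absurd (hdsep j k hjk) (not_le.mpr hlt)
  have hbound : ∀ j, E j ⊆ Metric.ball (0 : EuclideanSpace ℂ (Fin n)) 3 := by
    intro j w hw
    have h1 : ‖w - z j‖ ^ 2 ≤ 4 * c ^ 2 * (1 - ‖z j‖ ^ 2) := hw.1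
    have hzj := hz j
    have hzj0 := norm_nonneg (z j)
    have hwz : ‖w - z j‖ ≤ 1 := by nlinarith [norm_nonneg (w - z j)]
    have hwn : ‖w‖ ≤ 2 := by
      have := norm_add_le (z j) (w - z j)
      rw [add_sub_cancel] at this
      linarith
    rw [Metric.mem_ball, dist_zero_right]
    linarith
  have hunion : volume (⋃ j, E j) ≤ volume (Metric.ball (0 : EuclideanSpace ℂ (Fin n)) 3) :=
    measure_mono (Set.iUnion_subset hbound)
  have hsum_fin : ∑' j, volume (E j) ≠ ⊤ := by
    rw [← measure_iUnion hdisj hEmeas]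
    exact (lt_of_le_of_lt hunion measure_ball_lt_top).ne
  have hsummable := ENNReal.summable_toReal hsum_fin
  have hsqn : (0:ℝ) < Real.sqrt n := Real.sqrt_pos.mpr (by exact_mod_cast Nat.pos_of_ne_zero (by omega))
  set C : ℝ := (c / Real.sqrt n) ^ (2 * n) with hC_def
  have hC0 : 0 < C := pow_pos (div_pos hc0 hsqn) _
  have hEfin : ∀ j, volume (E j) ≠ ⊤ := fun j =>
    (lt_of_le_of_lt (measure_mono (hbound j)) measure_ball_lt_top).ne
  refine Summable.of_nonneg_of_le (fun j => pow_nonneg (by linarith [hz j]) _) (fun j => ?_)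
    (hsummable.mul_left C⁻¹)
  have hv := tube_volume hn hc0 hc1 (z j) (hz j)
  have hvE : ENNReal.ofReal (C * (1 - ‖z j‖ ^ 2) ^ (n + 1)) ≤ volume (E j) := hv
  have hv' : C * (1 - ‖z j‖ ^ 2) ^ (n + 1) ≤ (volume (E j)).toReal :=
    (ENNReal.ofReal_le_iff_le_toReal (hEfin j)).mp hvE
  have hzj := hz j
  have hzj0 := norm_nonneg (z j)
  have hmono : (1 - ‖z j‖) ^ (n + 1) ≤ (1 - ‖z j‖ ^ 2) ^ (n + 1) := by
    apply pow_le_pow_left₀ (by nlinarith) (by nlinarith)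
  calc (1 - ‖z j‖) ^ (n + 1) ≤ (1 - ‖z j‖ ^ 2) ^ (n + 1) := hmono
    _ = C⁻¹ * (C * (1 - ‖z j‖ ^ 2) ^ (n + 1)) := by
        rw [← mul_assoc, inv_mul_cancel₀ hC0.ne', one_mul]
    _ ≤ C⁻¹ * (volume (E j)).toReal :=
        mul_le_mul_of_nonneg_left hv' (inv_nonneg.mpr hC0.le)
end
end

section
/- Let Γ = {z_j} be a sequence in Bⁿ that is uniformly discrete with respect to the pseudohyperbolic distance and satisfies 0 < ‖z_j‖ < 1 for all j. Let h : (0,∞) → (0,∞) be an increasing function with Σ_{m=1}^∞ h(1/m) < ∞. Then Σ_j (1-‖z_j‖)^{2n} · h(-1/log(1-‖z_j‖)) < ∞. -/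
open scoped ComplexInnerProductSpace

noncomputable section

lemma pdist_le_one' {n : ℕ} (z w : EuclideanSpace ℂ (Fin n)) (hz : ‖z‖ ≤ 1) (hw : ‖w‖ ≤ 1) :
    pdist z w ≤ 1 := by
  have h0z := norm_nonneg z
  have h0w := norm_nonneg w
  have : (1 - ‖z‖ ^ 2) * (1 - ‖w‖ ^ 2) / ‖1 - ⟪z, w⟫‖ ^ 2 ≥ 0 := by
    apply div_nonneg
    · apply mul_nonneg <;> nlinarith
    · positivity
  exact Real.sqrt_le_one.mpr (by linarith)

lemma pdist_le' {n : ℕ} (z w : EuclideanSpace ℂ (Fin n)) (hz : ‖z‖ < 1) (hw : ‖w‖ < 1) :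
    pdist z w * (1 - ‖z‖ * ‖w‖) ≤ ‖z - w‖ := by
  set a := (⟪z, w⟫ : ℂ) with ha
  have hcs : ‖a‖ ≤ ‖z‖ * ‖w‖ := by
    simpa using norm_inner_le_norm (𝕜 := ℂ) z w
  have habs : 0 < 1 - ‖z‖ * ‖w‖ := by nlinarith [norm_nonneg z, norm_nonneg w]
  have hB : (1 - ‖z‖ * ‖w‖)^2 ≤ ‖1 - a‖ ^ 2 := by
    have h1 : 1 - ‖a‖ ≤ ‖1 - a‖ := by
      simpa using norm_sub_norm_le (1 : ℂ) a
    nlinarith [norm_nonneg (1 - a), norm_nonneg a]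
  have hnorm : ‖z - w‖^2 = ‖z‖^2 - 2 * (Complex.re a) + ‖w‖^2 := by
    have := @norm_sub_sq ℂ _ _ _ _ z w
    simpa [ha] using this
  have hexp : ‖1 - a‖ ^ 2 = 1 - 2 * a.re + ‖a‖ ^ 2 := by
    rw [Complex.sq_norm, Complex.sq_norm, Complex.normSq_apply, Complex.normSq_apply]
    simp [Complex.sub_re, Complex.sub_im]
    ring
  have hBA : ‖1 - a‖ ^ 2 - (1 - ‖z‖^2) * (1 - ‖w‖^2) ≤ ‖z - w‖^2 := by
    rw [hexp, hnorm]
    nlinarith [norm_nonneg z, norm_nonneg w, norm_nonneg a]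
  have hBpos : (0:ℝ) < ‖1 - a‖ ^ 2 := by nlinarith
  have h1 : 1 - (1 - ‖z‖ ^ 2) * (1 - ‖w‖ ^ 2) / ‖1 - a‖ ^ 2
      ≤ ‖z - w‖^2 / ‖1 - a‖ ^ 2 := by
    rw [le_div_iff₀ hBpos, sub_mul, div_mul_cancel₀ _ (ne_of_gt hBpos)]
    linarith
  have h2 : pdist z w ≤ ‖z - w‖ / ‖1 - a‖ := by
    calc pdist z w ≤ Real.sqrt (‖z - w‖^2 / ‖1 - a‖ ^ 2) := Real.sqrt_le_sqrt h1
    _ = ‖z - w‖ / ‖1 - a‖ := by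
        rw [← div_pow, Real.sqrt_sq (by positivity)]
  have hpd : 0 ≤ pdist z w := Real.sqrt_nonneg _
  have h3 : 1 - ‖z‖ * ‖w‖ ≤ ‖1 - a‖ := by
    nlinarith [norm_nonneg (1 - a)]
  calc pdist z w * (1 - ‖z‖ * ‖w‖) ≤ pdist z w * ‖1 - a‖ := by
        apply mul_le_mul_of_nonneg_left h3 hpd
    _ ≤ ‖z - w‖ := by
        rw [le_div_iff₀ (by linarith)] at h2; exact h2

/-- **Proposition 3.4 (Abate–Saracco), in the ball.** If a sequence in the unit ball of `ℂⁿ`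
is uniformly discrete with respect to the pseudohyperbolic distance and `0 < ‖z_j‖ < 1` for
all `j`, and if `h : (0,∞) → (0,∞)` is increasing with `Σ_{m≥1} h(1/m) < ∞`, then
`Σ_j (1-‖z_j‖)^{2n}·h(-1/log(1-‖z_j‖)) < ∞`. -/
theorem stmt_16 (n : ℕ) (hn : 1 ≤ n) (z : ℕ → EuclideanSpace ℂ (Fin n))
    (hz0 : ∀ j, 0 < ‖z j‖) (hz1 : ∀ j, ‖z j‖ < 1) (δ : ℝ) (hδ : 0 < δ)
    (hsep : ∀ j k, j ≠ k → δ ≤ pdist (z j) (z k))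
    (h : ℝ → ℝ) (hpos : ∀ x, 0 < x → 0 < h x)
    (hmono : ∀ x y, 0 < x → x ≤ y → h x ≤ h y)
    (hsum : Summable fun m : ℕ => h (1 / (m + 1))) :
    Summable fun j => (1 - ‖z j‖) ^ (2 * n) * h (-1 / Real.log (1 - ‖z j‖)) := by
  have hδ1 : δ ≤ 1 :=
    le_trans (hsep 0 1 (by norm_num)) (pdist_le_one' _ _ (hz1 0).le (hz1 1).le)
  -- Euclidean separation
  have hsep' : ∀ j k, j ≠ k →
      δ * (1 - ‖z j‖) / 2 + δ * (1 - ‖z k‖) / 2 ≤ dist (z j) (z k) := by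
    intro j k hjk
    have h1 := pdist_le' (z j) (z k) (hz1 j) (hz1 k)
    have h2 := hsep j k hjk
    have hu := hz0 j; have hu1 := hz1 j
    have hv := hz0 k; have hv1 := hz1 k
    have h3 : (0:ℝ) < 1 - ‖z j‖ * ‖z k‖ := by nlinarith
    have h4 : δ * (1 - ‖z j‖ * ‖z k‖) ≤ ‖z j - z k‖ :=
      le_trans (mul_le_mul_of_nonneg_right h2 h3.le) h1
    rw [dist_eq_norm]
    nlinarith [mul_nonneg (mul_nonneg hδ.le hu.le) (by linarith : (0:ℝ) ≤ 1 - ‖z k‖),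
      mul_nonneg (mul_nonneg hδ.le hv.le) (by linarith : (0:ℝ) ≤ 1 - ‖z j‖)]
  set r : ℕ → ℝ := fun j => δ * (1 - ‖z j‖) / 2 with hrdef
  have hr : ∀ j, 0 < r j := fun j => by
    have h1 : (0:ℝ) < 1 - ‖z j‖ := by linarith [hz1 j]
    show (0:ℝ) < δ * (1 - ‖z j‖) / 2
    positivity
  have hdisj : Pairwise (Function.onFun Disjoint fun j => Metric.ball (z j) (r j)) := by
    intro j k hjk
    exact Metric.ball_disjoint_ball (hsep' j k hjk)
  have hsub : ∀ j, Metric.ball (z j) (r j) ⊆ Metric.ball (0 : EuclideanSpace ℂ (Fin n)) 2 := by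
    intro j x hx
    rw [Metric.mem_ball] at hx ⊢
    have h1 : dist x 0 ≤ dist x (z j) + dist (z j) 0 := dist_triangle _ _ _
    have h2 : dist (z j) 0 = ‖z j‖ := by simp
    have h3 : r j ≤ 1/2 := by
      have := hz0 j; have := hz1 j
      show δ * (1 - ‖z j‖) / 2 ≤ 1/2
      nlinarith
    linarith [hz1 j]
  -- measure theory setup
  haveI : FiniteDimensional ℝ (EuclideanSpace ℂ (Fin n)) := FiniteDimensional.trans ℝ ℂ _
  borelize (EuclideanSpace ℂ (Fin n))
  haveI : Nontrivial (EuclideanSpace ℂ (Fin n)) := by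
    refine nontrivial_of_ne (z 0) 0 ?_
    intro hzz
    have := hz0 0; rw [hzz] at this; simp at this
  set μ : MeasureTheory.Measure (EuclideanSpace ℂ (Fin n)) :=
    (Module.finBasis ℝ (EuclideanSpace ℂ (Fin n))).addHaar with hμ
  have hfr : Module.finrank ℝ (EuclideanSpace ℂ (Fin n)) = 2 * n := by
    rw [← Module.finrank_mul_finrank ℝ ℂ (EuclideanSpace ℂ (Fin n)),
      Complex.finrank_real_complex, finrank_euclideanSpace, Fintype.card_fin]
  have hball : ∀ j, μ (Metric.ball (z j) (r j)) =
      ENNReal.ofReal (r j ^ (2 * n)) * μ (Metric.ball 0 1) := by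
    intro j
    rw [MeasureTheory.Measure.addHaar_ball μ (z j) (hr j).le, hfr]
  have hiu : ∑' j, μ (Metric.ball (z j) (r j)) ≤ μ (Metric.ball 0 2) := by
    rw [← MeasureTheory.measure_iUnion hdisj (fun j => measurableSet_ball)]
    exact MeasureTheory.measure_mono (Set.iUnion_subset hsub)
  have hc0 : μ (Metric.ball (0 : EuclideanSpace ℂ (Fin n)) 1) ≠ 0 :=
    (Metric.measure_ball_pos μ 0 one_pos).ne'
  have htsum : ∑' j, ENNReal.ofReal (r j ^ (2 * n)) ≠ ⊤ := by
    intro htop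
    have h1 : (∑' j, ENNReal.ofReal (r j ^ (2 * n))) * μ (Metric.ball 0 1)
        ≤ μ (Metric.ball (0 : EuclideanSpace ℂ (Fin n)) 2) := by
      rw [← ENNReal.tsum_mul_right]
      simpa [hball] using hiu
    rw [htop, ENNReal.top_mul hc0] at h1
    exact (MeasureTheory.measure_ball_lt_top.ne) (top_le_iff.mp h1)
  have hsummable : Summable fun j => r j ^ (2 * n) := by
    have := ENNReal.summable_toReal htsum
    refine this.congr fun j => ?_
    rw [ENNReal.toReal_ofReal (pow_nonneg (hr j).le _)]
  have hg : Summable fun j => (1 - ‖z j‖) ^ (2 * n) := by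
    have hne : ((δ / 2) ^ (2 * n) : ℝ) ≠ 0 := by positivity
    rw [← summable_mul_left_iff hne]
    refine hsummable.congr fun j => ?_
    show (δ * (1 - ‖z j‖) / 2) ^ (2*n) = _
    rw [show δ * (1 - ‖z j‖)/2 = δ/2 * (1 - ‖z j‖) by ring, mul_pow]
  -- the bad set is finite
  have hev : ∀ᶠ j in Filter.cofinite, (1:ℝ)/2 < ‖z j‖ := by
    have h0 := hg.tendsto_cofinite_zero
    have hpos2 : (0:ℝ) < (1/2) ^ (2*n) := by positivity
    have h1 : ∀ᶠ j in Filter.cofinite, (1 - ‖z j‖) ^ (2 * n) < (1/2) ^ (2 * n) :=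
      h0.eventually (gt_mem_nhds hpos2)
    refine h1.mono fun j hj => ?_
    by_contra hcon
    push_neg at hcon
    have : ((1:ℝ)/2) ^ (2*n) ≤ (1 - ‖z j‖) ^ (2*n) :=
      pow_le_pow_left₀ (by norm_num) (by linarith) _
    linarith
  have hsfin : {j | ¬ ((1:ℝ)/2 < ‖z j‖)}.Finite := hev
  have hlogneg : ∀ j, Real.log (1 - ‖z j‖) < 0 := fun j =>
    Real.log_neg (by linarith [hz1 j]) (by linarith [hz0 j])
  have hargpos : ∀ j, 0 < -1 / Real.log (1 - ‖z j‖) := fun j =>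
    div_pos_of_neg_of_neg (by norm_num) (hlogneg j)
  have hfnonneg : ∀ j : ℕ, 0 ≤ (1 - ‖z j‖) ^ (2 * n) * h (-1 / Real.log (1 - ‖z j‖)) :=
    fun j => mul_nonneg (pow_nonneg (by linarith [hz1 j]) _) (hpos _ (hargpos j)).le
  rw [← hsfin.summable_compl_iff]
  have hC : ∀ j : ℕ, (1:ℝ)/2 < ‖z j‖ →
      h (-1 / Real.log (1 - ‖z j‖)) ≤ h (1 / Real.log 2) := by
    intro j hj
    have h1 : 1 - ‖z j‖ ≤ 1/2 := by linarith
    have h2 : Real.log (1 - ‖z j‖) ≤ Real.log (1/2) :=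
      Real.log_le_log (by linarith [hz1 j]) h1
    have h3 : Real.log ((1:ℝ)/2) = -Real.log 2 := by
      rw [Real.log_div one_ne_zero (by norm_num)]; simp
    have hlog2 : (0:ℝ) < Real.log 2 := Real.log_pos (by norm_num)
    have hL : Real.log 2 ≤ -Real.log (1 - ‖z j‖) := by rw [h3] at h2; linarith
    have h5 : -1 / Real.log (1 - ‖z j‖) = 1 / (-Real.log (1 - ‖z j‖)) := by
      rw [div_neg, neg_div]
    have h4 : -1 / Real.log (1 - ‖z j‖) ≤ 1 / Real.log 2 := by
      rw [h5]
      exact one_div_le_one_div_of_le hlog2 hL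
    exact hmono _ _ (hargpos j) h4
  apply Summable.of_nonneg_of_le (fun j => hfnonneg _)
    (f := fun j : ↥{j | ¬ ((1:ℝ)/2 < ‖z j‖)}ᶜ =>
      (1 - ‖z (j:ℕ)‖) ^ (2*n) * h (1 / Real.log 2))
  · intro j
    have hj : (1:ℝ)/2 < ‖z (j:ℕ)‖ := by
      have := j.2; simpa [Set.mem_compl_iff] using this
    exact mul_le_mul_of_nonneg_left (hC _ hj) (pow_nonneg (by linarith [hz1 (j:ℕ)]) _)
  · exact (hg.mul_right _).subtype _
end
end
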